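/- Let A(ρ) > 0 be smooth on ρ > 0, and on ℝ⁴(t,x,u,ρ) consider the vector fields X₊ = A(ρ)∂_u + ∂_ρ and Y₊ = (u - ρA(ρ))⁻¹∂_t + ∂_x (defined where u ≠ ρA(ρ)). The distribution ⟨X₊, Y₊⟩ is integrable (i.e., [X₊,Y₊] lies in the span of X₊ and Y₊) if and only if the derivative of ρA(ρ) in the direction X₊, acting on the coefficient of Y₊, vanishes appropriately; in particular, if A(ρ) = ρ⁻¹√(p′(ρ)) then both distributions C₊ = ⟨X₊,Y₊⟩ and C₋ = ⟨X₋,Y₋⟩ (with X₋ = -A∂_u+∂_ρ, Y₋ = (u+ρA)⁻¹∂_t+∂_x) are integrable when p(ρ) = c₀ρ³ + c₁ for constants c₀ > 0, c₁. -/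

import Mathlib

/- STATEMENT 7: For the characteristic vector fields X₊ = A(ρ)∂_u + ∂_ρ,
   Y₊ = (u - ρA(ρ))⁻¹∂_t + ∂_x (and X₋ = -A∂_u + ∂_ρ, Y₋ = (u + ρA)⁻¹∂_t + ∂_x)
   on ℝ⁴(t,x,u,ρ) (indices 0=t,1=x,2=u,3=ρ), with A(ρ) = ρ⁻¹√(p′(ρ)):
   if p(ρ) = c₀ρ³ + c₁ with c₀ > 0, then both characteristic distributions
   C₊ = ⟨X₊,Y₊⟩ and C₋ = ⟨X₋,Y₋⟩ are integrable, i.e. [X₊,Y₊] ∈ span{X₊,Y₊}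
   and [X₋,Y₋] ∈ span{X₋,Y₋} pointwise. -/

noncomputable def pd (i : Fin 4) (f : (Fin 4 → ℝ) → ℝ) (z : Fin 4 → ℝ) : ℝ :=
  deriv (fun s => f (Function.update z i s)) (z i)

/-- Lie bracket of vector fields on ℝ⁴ in coordinates. -/
noncomputable def lieBracket (X Y : (Fin 4 → ℝ) → Fin 4 → ℝ) (z : Fin 4 → ℝ) :
    Fin 4 → ℝ :=
  fun i => (∑ j, X z j * pd j (fun w => Y w i) z)
    - ∑ j, Y z j * pd j (fun w => X w i) z

noncomputable def Xplus (A : ℝ → ℝ) (z : Fin 4 → ℝ) : Fin 4 → ℝ := ![0, 0, A (z 3), 1]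
noncomputable def Yplus (A : ℝ → ℝ) (z : Fin 4 → ℝ) : Fin 4 → ℝ :=
  ![(z 2 - z 3 * A (z 3))⁻¹, 1, 0, 0]
noncomputable def Xminus (A : ℝ → ℝ) (z : Fin 4 → ℝ) : Fin 4 → ℝ := ![0, 0, -A (z 3), 1]
noncomputable def Yminus (A : ℝ → ℝ) (z : Fin 4 → ℝ) : Fin 4 → ℝ :=
  ![(z 2 + z 3 * A (z 3))⁻¹, 1, 0, 0]

lemma pd_const (c : ℝ) (j : Fin 4) (z : Fin 4 → ℝ) : pd j (fun _ => c) z = 0 := by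
  simp [pd]

lemma bracket_zero (A : ℝ → ℝ) (k : ℝ) (z : Fin 4 → ℝ)
    (hAz : A (z 3) = k) (hAev : ∀ᶠ s in nhds (z 3), A s = k)
    (hd : z 2 - z 3 * k ≠ 0) :
    lieBracket (Xplus A) (Yplus A) z = 0 := by
  have e1 : pd 2 (fun w => Yplus A w 0) z = -(1/(z 2 - z 3 * k)^2) := by
    unfold pd Yplus
    simp only [Matrix.cons_val_zero, Function.update_self,
      Function.update_of_ne (show (3:Fin 4) ≠ 2 by decide)]
    rw [hAz]
    have := (((hasDerivAt_id (z 2)).sub_const (z 3 * k)).inv hd).deriv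
    simp only [id_eq, Pi.inv_def] at this
    rw [this]; ring
  have e2 : pd 3 (fun w => Yplus A w 0) z = k/(z 2 - z 3 * k)^2 := by
    unfold pd Yplus
    simp only [Matrix.cons_val_zero, Function.update_self,
      Function.update_of_ne (show (2:Fin 4) ≠ 3 by decide)]
    have hev : (fun s => (z 2 - s * A s)⁻¹) =ᶠ[nhds (z 3)] fun s => (z 2 - s * k)⁻¹ := by
      filter_upwards [hAev] with s hs; rw [hs]
    rw [hev.deriv_eq]
    have := ((((hasDerivAt_id (z 3)).mul_const k).const_sub (z 2)).inv hd).deriv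
    simp only [id_eq, Pi.inv_def] at this
    rw [this]; ring
  have eX : ∀ i : Fin 4, ∀ j : Fin 4, j = 0 ∨ j = 1 → pd j (fun w => Xplus A w i) z = 0 := by
    intro i j hj
    unfold pd Xplus
    rcases hj with h | h <;> subst h <;>
      simp [Function.update_apply]
  funext i
  fin_cases i <;>
    simp only [lieBracket, Fin.sum_univ_four, Pi.zero_apply] <;>
    [skip;
     simp [Xplus, Yplus, pd_const, pd, Function.update_apply];
     simp [Xplus, Yplus, pd_const, pd, Function.update_apply];
     simp [Xplus, Yplus, pd_const, pd, Function.update_apply]]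
  simp only [Fin.zero_eta, Fin.isValue, Matrix.cons_val_zero]
  rw [e1, e2, eX 0 0 (Or.inl rfl), eX 0 1 (Or.inr rfl)]
  simp only [Xplus, Yplus, Matrix.cons_val_zero, Matrix.cons_val_one, Matrix.head_cons,
    Fin.isValue, Matrix.cons_val_two, Matrix.tail_cons, Matrix.cons_val_three, hAz]
  ring

lemma A_eq_const (c0 c1 : ℝ) (hc0 : 0 < c0)
    (p : ℝ → ℝ) (hp : ∀ r, p r = c0 * r ^ 3 + c1)
    (A : ℝ → ℝ) (hA : ∀ r, A r = r⁻¹ * Real.sqrt (deriv p r)) :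
    ∀ r : ℝ, 0 < r → A r = Real.sqrt (3 * c0) := by
  intro r hr
  have h2 : HasDerivAt p (c0 * (3 * r ^ 2)) r := by
    rw [show p = fun x => c0 * x ^ 3 + c1 from funext hp]
    simpa using ((hasDerivAt_pow 3 r).const_mul c0).add_const c1
  rw [hA, h2.deriv, show c0 * (3 * r ^ 2) = (3 * c0) * r ^ 2 by ring,
    Real.sqrt_mul (by positivity), Real.sqrt_sq hr.le]
  field_simp


theorem characteristic_distributions_integrable_for_cubic_pressure
    (c0 c1 : ℝ) (hc0 : 0 < c0)
    (p : ℝ → ℝ) (hp : ∀ r, p r = c0 * r ^ 3 + c1)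
    (A : ℝ → ℝ) (hA : ∀ r, A r = r⁻¹ * Real.sqrt (deriv p r)) :
    ∀ z : Fin 4 → ℝ, 0 < z 3 →
      ((z 2 ≠ z 3 * A (z 3)) →
        ∃ a b : ℝ, lieBracket (Xplus A) (Yplus A) z
          = a • Xplus A z + b • Yplus A z) ∧
      ((z 2 ≠ -(z 3 * A (z 3))) →
        ∃ a b : ℝ, lieBracket (Xminus A) (Yminus A) z
          = a • Xminus A z + b • Yminus A z) := by
  intro z hz
  set k := Real.sqrt (3 * c0) with hk
  have hAc := A_eq_const c0 c1 hc0 p hp A hA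
  have hAz : A (z 3) = k := hAc _ hz
  have hAev : ∀ᶠ s in nhds (z 3), A s = k := by
    filter_upwards [eventually_gt_nhds hz] with s hs using hAc s hs
  constructor
  · intro h
    refine ⟨0, 0, ?_⟩
    rw [bracket_zero A k z hAz hAev (sub_ne_zero.mpr (by rwa [← hAz]))]
    simp
  · intro h
    refine ⟨0, 0, ?_⟩
    have hXm : Xminus A = Xplus (fun r => -(A r)) := by
      funext w; simp [Xminus, Xplus]
    have hYm : Yminus A = Yplus (fun r => -(A r)) := by
      funext w; simp [Yminus, Yplus, sub_neg_eq_add, mul_neg]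
    rw [hXm, hYm, bracket_zero (fun r => -(A r)) (-k) z (by simp [hAz])
      (by filter_upwards [hAev] with s hs; simp [hs])
      (by rw [mul_neg, sub_neg_eq_add]; intro hc; apply h; rw [hAz]; linarith)]
    simp
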